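/- arXiv:1906.07470 — 2 statements merged into one kernel-verified Lean document; each statement's English description precedes it below -/
import Mathlib

section
/- Let A ∈ ℝ^{m×n}, let L = slt(A Aᵀ) + (1/ω) diag(A Aᵀ) for a parameter ω ≠ 0, and assume L is invertible. Let R be the m×m reverse identity matrix and define L̃ = slt((RA)(RA)ᵀ) + (1/ω) diag((RA)(RA)ᵀ). Then L̃ = R Lᵀ R, and consequently the up-sweep iteration matrix G̃ = I − (RA)ᵀ L̃^{-1} (RA) equals the transpose of the down-sweep iteration matrix G = I − Aᵀ L^{-1} A, i.e., G̃ = Gᵀ. -/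
open Matrix

/-- The reverse identity (anti-diagonal permutation) matrix. -/
def revId (n : ℕ) : Matrix (Fin n) (Fin n) ℝ :=
  Matrix.of fun i j => if j = i.rev then 1 else 0

/-- Strictly lower triangular part of a square matrix. -/
def slt {n : ℕ} (M : Matrix (Fin n) (Fin n) ℝ) : Matrix (Fin n) (Fin n) ℝ :=
  Matrix.of fun i j => if j < i then M i j else 0

/-- The diagonal part of a square matrix. -/
def diagPart {n : ℕ} (M : Matrix (Fin n) (Fin n) ℝ) : Matrix (Fin n) (Fin n) ℝ :=
  Matrix.diagonal fun i => M i i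

lemma rev_comm {m : ℕ} {i j : Fin m} : j = i.rev ↔ i = j.rev := by
  constructor <;> rintro rfl <;> simp [Fin.rev_rev]

lemma revId_mul_apply {m k : ℕ} (M : Matrix (Fin m) (Fin k) ℝ) (i : Fin m) (j : Fin k) :
    (revId m * M) i j = M i.rev j := by
  simp only [Matrix.mul_apply, revId, Matrix.of_apply]
  rw [Finset.sum_eq_single i.rev] <;> simp (config := {contextual := true}) [eq_comm]

lemma mul_revId_apply {m k : ℕ} (M : Matrix (Fin k) (Fin m) ℝ) (i : Fin k) (j : Fin m) :
    (M * revId m) i j = M i j.rev := by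
  simp only [Matrix.mul_apply, revId, Matrix.of_apply]
  rw [Finset.sum_eq_single j.rev] <;>
    simp (config := {contextual := true}) [rev_comm]

lemma revId_mul_revId (m : ℕ) : revId m * revId m = 1 := by
  ext i j
  rw [revId_mul_apply]
  simp [revId, Matrix.one_apply, rev_comm, eq_comm]

lemma revId_transpose (m : ℕ) : (revId m)ᵀ = revId m := by
  ext i j
  simp only [Matrix.transpose_apply, revId, Matrix.of_apply]
  by_cases h : i = j.rev
  · rw [if_pos h, if_pos (rev_comm.mpr h)]
  · rw [if_neg h, if_neg (fun hh => h (rev_comm.mp hh))]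

theorem upSweep_iteration_matrix_is_transpose {m n : ℕ}
    (A : Matrix (Fin m) (Fin n) ℝ) (ω : ℝ) (hω : ω ≠ 0)
    (L Ltilde : Matrix (Fin m) (Fin m) ℝ)
    (hLdef : L = slt (A * Aᵀ) + ω⁻¹ • diagPart (A * Aᵀ))
    (hL : IsUnit L)
    (hLtdef : Ltilde = slt ((revId m * A) * (revId m * A)ᵀ) +
      ω⁻¹ • diagPart ((revId m * A) * (revId m * A)ᵀ)) :
    Ltilde = revId m * Lᵀ * revId m ∧
    (1 : Matrix (Fin n) (Fin n) ℝ) - (revId m * A)ᵀ * Ltilde⁻¹ * (revId m * A) =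
      ((1 : Matrix (Fin n) (Fin n) ℝ) - Aᵀ * L⁻¹ * A)ᵀ := by
  have hBsymm : ∀ i j : Fin m, (A * Aᵀ) i j = (A * Aᵀ) j i := by
    intro i j
    simp [Matrix.mul_apply, mul_comm]
  have hRAA : (revId m * A) * (revId m * A)ᵀ = revId m * (A * Aᵀ) * revId m := by
    rw [Matrix.transpose_mul, revId_transpose]
    simp only [Matrix.mul_assoc]
  have key : Ltilde = revId m * Lᵀ * revId m := by
    subst hLdef hLtdef
    rw [hRAA]
    ext i j
    rw [mul_revId_apply, revId_mul_apply, Matrix.transpose_apply]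
    simp only [Matrix.add_apply, Matrix.smul_apply, slt, diagPart, Matrix.of_apply,
      Matrix.diagonal_apply, mul_revId_apply, revId_mul_apply, smul_eq_mul]
    have hlt : j < i ↔ i.rev < j.rev := (Fin.rev_lt_rev).symm
    have heq : (i = j) ↔ (j.rev = i.rev) := by
      constructor <;> intro h
      · rw [h]
      · have := congrArg Fin.rev h; simp only [Fin.rev_rev] at this; exact this.symm
    rw [hBsymm i.rev j.rev]
    by_cases h1 : j < i
    · rw [if_pos h1, if_pos (hlt.mp h1), if_neg (by omega), if_neg (by
        intro h; exact absurd (heq.mpr h) (by omega))]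
    · rw [if_neg h1, if_neg (fun h => h1 (hlt.mpr h))]
      by_cases h2 : i = j
      · subst h2; simp
      · rw [if_neg h2, if_neg (fun h => h2 (heq.mpr h))]
  refine ⟨key, ?_⟩
  have hRR : ∀ k (Y : Matrix (Fin m) (Fin k) ℝ), revId m * (revId m * Y) = Y := by
    intro k Y; rw [← Matrix.mul_assoc, revId_mul_revId, Matrix.one_mul]
  have hdet : IsUnit L.det := (Matrix.isUnit_iff_isUnit_det L).mp hL
  have hinv : Ltilde⁻¹ = revId m * (L⁻¹)ᵀ * revId m := by
    apply Matrix.inv_eq_right_inv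
    rw [key]
    calc revId m * Lᵀ * revId m * (revId m * (L⁻¹)ᵀ * revId m)
        = revId m * (Lᵀ * (L⁻¹)ᵀ) * revId m := by
          simp only [Matrix.mul_assoc, hRR]
      _ = 1 := by
          rw [← Matrix.transpose_mul, Matrix.nonsing_inv_mul L hdet]
          simp [revId_mul_revId, Matrix.mul_assoc]
  rw [hinv, Matrix.transpose_mul, revId_transpose]
  rw [Matrix.transpose_sub, Matrix.transpose_one, Matrix.transpose_mul, Matrix.transpose_mul,
    Matrix.transpose_transpose]
  congr 1
  simp only [Matrix.mul_assoc, hRR]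
end

section
/- Under the assumptions of Proposition 3.1—G diagonalizable with a unique dominant simple eigenvalue λ₁ with |λ₂| < |λ₁| < 1, right eigenvector v₁, left eigenvector ṽ₁ linearly independent of v₁ (nonnormal eigenvalue), and initial errors e₀, ẽ₀ with nonzero dominant components d₁, d̃₁ respectively—the gauge g_k = ‖G^k e₀ − (Gᵀ)^k ẽ₀‖ satisfies g_k / |λ₁|^k → ‖d₁ v₁ − d̃₁ ṽ₁‖ > 0, and hence g_k / ‖G^k e₀‖ → ‖d₁ v₁ − d̃₁ ṽ₁‖ / (|d₁| ‖v₁‖), a finite positive constant: the error gauge is asymptotically proportional to the true error norm. -/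
open Filter Matrix

private lemma aux_pow_eig {n : ℕ} (M : Matrix (Fin n) (Fin n) ℂ) {μ : ℂ} {w : Fin n → ℂ}
    (h : M.mulVec w = μ • w) (k : ℕ) : (M ^ k).mulVec w = μ ^ k • w := by
  induction k with
  | zero => simp
  | succ k ih =>
    rw [pow_succ, ← mulVec_mulVec, h]
    rw [show (M ^ k).mulVec (μ • w) = μ • (M ^ k).mulVec w from
      map_smul ((M ^ k).mulVecLin) μ w, ih, smul_smul, pow_succ, mul_comm]

private lemma aux_tendsto {n : ℕ} (hn : 2 ≤ n) (M : Matrix (Fin n) (Fin n) ℂ)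
    (μ : Fin n → ℂ) (u : Fin n → (Fin n → ℂ))
    (heig : ∀ i, M.mulVec (u i) = μ i • u i)
    (hsorted : ∀ i j : Fin n, i ≤ j → ‖μ j‖ ≤ ‖μ i‖)
    (hgap : ‖μ ⟨1, Nat.one_lt_two.trans_le hn⟩‖ < ‖μ ⟨0, Nat.zero_lt_two.trans_le hn⟩‖)
    (c : Fin n → ℂ) :
    Tendsto (fun k => (μ ⟨0, Nat.zero_lt_two.trans_le hn⟩ ^ k)⁻¹ • (M ^ k).mulVec (∑ i, c i • u i))
      atTop (nhds (c ⟨0, Nat.zero_lt_two.trans_le hn⟩ • u ⟨0, Nat.zero_lt_two.trans_le hn⟩)) := by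
  set i0 : Fin n := ⟨0, Nat.zero_lt_two.trans_le hn⟩ with hi0
  set i1 : Fin n := ⟨1, Nat.one_lt_two.trans_le hn⟩ with hi1
  have hmu0 : μ i0 ≠ 0 := by
    intro h
    exact (norm_nonneg _).not_gt (by simpa [h] using hgap)
  have hfun : ∀ k, (μ i0 ^ k)⁻¹ • (M ^ k).mulVec (∑ i, c i • u i)
      = ∑ i, ((μ i / μ i0) ^ k * c i) • u i := by
    intro k
    have h1 : (M ^ k).mulVec (∑ i, c i • u i) = ∑ i, c i • (μ i ^ k • u i) := by
      rw [show (M ^ k).mulVec (∑ i, c i • u i)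
            = (M ^ k).mulVecLin (∑ i, c i • u i) from rfl, map_sum]
      refine Finset.sum_congr rfl fun i _ => ?_
      rw [_root_.map_smul, mulVecLin_apply, aux_pow_eig M (heig i) k]
    rw [h1, Finset.smul_sum]
    refine Finset.sum_congr rfl fun i _ => ?_
    rw [smul_smul, smul_smul]
    congr 1
    rw [div_pow, div_eq_mul_inv]
    ring
  rw [show Tendsto (fun k => (μ i0 ^ k)⁻¹ • (M ^ k).mulVec (∑ i, c i • u i)) atTop
        (nhds (c i0 • u i0))
      = Tendsto (fun k => ∑ i, ((μ i / μ i0) ^ k * c i) • u i) atTop (nhds (c i0 • u i0))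
    from by rw [funext hfun]]
  have hL : c i0 • u i0 = ∑ i : Fin n, (if i = i0 then c i0 • u i0 else 0) := by simp
  rw [hL]
  refine tendsto_finset_sum _ fun i _ => ?_
  by_cases h : i = i0
  · subst h
    simp [div_self hmu0]
  · simp only [h, if_neg h]
    have hvne : (i : ℕ) ≠ 0 := fun hv => h (Fin.ext hv)
    have hle : i1 ≤ i := by rw [Fin.le_def]; simp [hi1]; omega
    have hlt : ‖μ i / μ i0‖ < 1 := by
      rw [norm_div, div_lt_one ((norm_nonneg (μ i1)).trans_lt hgap)]
      exact lt_of_le_of_lt (hsorted i1 i hle) hgap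
    have h0 := tendsto_pow_atTop_nhds_zero_of_norm_lt_one hlt
    have := (h0.mul_const (c i)).smul_const (u i)
    simpa using this

theorem error_gauge_asymptotically_proportional {n : ℕ} (hn : 2 ≤ n)
    (G : Matrix (Fin n) (Fin n) ℂ)
    (μ : Fin n → ℂ)
    (v vt : Module.Basis (Fin n) ℂ (Fin n → ℂ))
    -- right eigenvectors of G:
    (heig : ∀ i, G.mulVec (v i) = μ i • v i)
    -- left eigenvectors of G, i.e. right eigenvectors of Gᵀ, same eigenvalues:
    (heigT : ∀ i, Gᵀ.mulVec (vt i) = μ i • vt i)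
    (hsorted : ∀ i j : Fin n, i ≤ j → ‖μ j‖ ≤ ‖μ i‖)
    (hgap : ‖μ ⟨1, by omega⟩‖ < ‖μ ⟨0, by omega⟩‖)
    (hlt1 : ‖μ ⟨0, by omega⟩‖ < 1)
    -- nonnormality of the dominant eigenvalue:
    (hindep : LinearIndependent ℂ ![(v ⟨0, by omega⟩ : Fin n → ℂ), (vt ⟨0, by omega⟩ : Fin n → ℂ)])
    (e₀ et₀ : Fin n → ℂ) (d dt : Fin n → ℂ)
    (hdecomp : e₀ = ∑ i, d i • (v i : Fin n → ℂ))
    (hdecompT : et₀ = ∑ i, dt i • (vt i : Fin n → ℂ))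
    (hd1 : d ⟨0, by omega⟩ ≠ 0) (hdt1 : dt ⟨0, by omega⟩ ≠ 0) :
    Tendsto (fun k => ‖(G ^ k).mulVec e₀ - (Gᵀ ^ k).mulVec et₀‖ / ‖μ ⟨0, by omega⟩‖ ^ k)
      atTop
      (nhds ‖d ⟨0, by omega⟩ • (v ⟨0, by omega⟩ : Fin n → ℂ) -
              dt ⟨0, by omega⟩ • (vt ⟨0, by omega⟩ : Fin n → ℂ)‖) ∧
    0 < ‖d ⟨0, by omega⟩ • (v ⟨0, by omega⟩ : Fin n → ℂ) -
          dt ⟨0, by omega⟩ • (vt ⟨0, by omega⟩ : Fin n → ℂ)‖ ∧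
    Tendsto (fun k => ‖(G ^ k).mulVec e₀ - (Gᵀ ^ k).mulVec et₀‖ / ‖(G ^ k).mulVec e₀‖)
      atTop
      (nhds (‖d ⟨0, by omega⟩ • (v ⟨0, by omega⟩ : Fin n → ℂ) -
               dt ⟨0, by omega⟩ • (vt ⟨0, by omega⟩ : Fin n → ℂ)‖ /
             (‖d ⟨0, by omega⟩‖ * ‖(v ⟨0, by omega⟩ : Fin n → ℂ)‖))) := by
  subst hdecomp
  subst hdecompT
  have hnpos : 0 < ‖μ (⟨0, by omega⟩ : Fin n)‖ := (norm_nonneg _).trans_lt hgap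
  have hA := aux_tendsto hn G μ (fun i => v i) heig hsorted hgap d
  have hB := aux_tendsto hn Gᵀ μ (fun i => vt i) heigT hsorted hgap dt
  -- the difference converges
  have hdiff : Tendsto
      (fun k => (μ (⟨0, by omega⟩ : Fin n) ^ k)⁻¹ •
        ((G ^ k).mulVec (∑ i, d i • (v i : Fin n → ℂ)) -
         (Gᵀ ^ k).mulVec (∑ i, dt i • (vt i : Fin n → ℂ))))
      atTop
      (nhds (d ⟨0, by omega⟩ • (v ⟨0, by omega⟩ : Fin n → ℂ) -
             dt ⟨0, by omega⟩ • (vt ⟨0, by omega⟩ : Fin n → ℂ))) := by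
    have := hA.sub hB
    refine this.congr fun k => ?_
    rw [smul_sub]
  have hfirst : Tendsto
      (fun k => ‖(G ^ k).mulVec (∑ i, d i • (v i : Fin n → ℂ)) -
                 (Gᵀ ^ k).mulVec (∑ i, dt i • (vt i : Fin n → ℂ))‖ /
                ‖μ (⟨0, by omega⟩ : Fin n)‖ ^ k)
      atTop
      (nhds ‖d ⟨0, by omega⟩ • (v ⟨0, by omega⟩ : Fin n → ℂ) -
              dt ⟨0, by omega⟩ • (vt ⟨0, by omega⟩ : Fin n → ℂ)‖) := by
    refine hdiff.norm.congr fun k => ?_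
    rw [norm_smul, norm_inv, norm_pow, inv_mul_eq_div]
  have hne : d ⟨0, by omega⟩ • (v ⟨0, by omega⟩ : Fin n → ℂ) -
      dt ⟨0, by omega⟩ • (vt ⟨0, by omega⟩ : Fin n → ℂ) ≠ 0 := by
    intro h
    have h' : d ⟨0, by omega⟩ • (v ⟨0, by omega⟩ : Fin n → ℂ) +
        (-dt ⟨0, by omega⟩) • (vt ⟨0, by omega⟩ : Fin n → ℂ) = 0 := by
      rw [neg_smul, ← sub_eq_add_neg]; exact h
    exact hd1 (LinearIndependent.pair_iff.mp hindep _ _ h').1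
  have hpos : 0 < ‖d ⟨0, by omega⟩ • (v ⟨0, by omega⟩ : Fin n → ℂ) -
      dt ⟨0, by omega⟩ • (vt ⟨0, by omega⟩ : Fin n → ℂ)‖ := norm_pos_iff.mpr hne
  refine ⟨hfirst, hpos, ?_⟩
  -- denominator convergence
  have hden : Tendsto
      (fun k => ‖(G ^ k).mulVec (∑ i, d i • (v i : Fin n → ℂ))‖ /
        ‖μ (⟨0, by omega⟩ : Fin n)‖ ^ k)
      atTop
      (nhds (‖d ⟨0, by omega⟩‖ * ‖(v ⟨0, by omega⟩ : Fin n → ℂ)‖)) := by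
    have h1 := hA.norm
    rw [norm_smul] at h1
    refine h1.congr fun k => ?_
    rw [norm_smul, norm_inv, norm_pow, inv_mul_eq_div]
  have hden_ne : ‖d ⟨0, by omega⟩‖ * ‖(v ⟨0, by omega⟩ : Fin n → ℂ)‖ ≠ 0 :=
    mul_ne_zero (norm_ne_zero_iff.mpr hd1) (norm_ne_zero_iff.mpr (v.ne_zero _))
  have hquot := hfirst.div hden hden_ne
  refine hquot.congr fun k => ?_
  have hc : (‖μ (⟨0, by omega⟩ : Fin n)‖ ^ k : ℝ) ≠ 0 := by positivity
  simp only [Pi.div_apply]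
  rw [div_div_div_cancel_right₀ hc]
end
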